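/- Let G : [0,1]² → ℝ and let x_m = (m−0.5)/(2M), y_n = (n−0.5)/(2N) be the collocation points, for m = 1,...,2M and n = 1,...,2N with M = 2^{L₁}, N = 2^{L₂}. Then the 2M·2N × 2M·2N linear system G(x_m, y_n) = Σ_{p=1}^{2M} Σ_{q=1}^{2N} b_{p,q} h_p(x_m) h_q(y_n) has a unique solution (b_{p,q}); equivalently, the matrix (h_p(x_m))_{m,p} with entries given by evaluating the first 2M Haar functions at the 2M collocation points is invertible. -/

import Mathlib

open MeasureTheory

/-- The level scale τ = 2^⌊log₂(i−1)⌋ of the `i`-th Haar function (for `i ≥ 2`). -/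
def haarScale (i : ℕ) : ℕ := 2 ^ (Nat.log 2 (i - 1))

/-- The translation index σ = i − τ of the `i`-th Haar function (for `i ≥ 2`). -/
def haarSig (i : ℕ) : ℕ := i - haarScale i

/-- The Haar family on [0,1): `haar 1 = 1` on `[0,1)`; for `i ≥ 2`, `haar i` equals `1` on
`[α,β)`, `-1` on `[β,γ)` and `0` elsewhere, where `α = (σ-1)/τ`, `β = (σ-1/2)/τ`, `γ = σ/τ`. -/
noncomputable def haar (i : ℕ) (y : ℝ) : ℝ :=
  if i = 1 then (if 0 ≤ y ∧ y < 1 then 1 else 0)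
  else
    let τ : ℝ := haarScale i
    let σ : ℝ := haarSig i
    if (σ - 1) / τ ≤ y ∧ y < (σ - 1/2) / τ then 1
    else if (σ - 1/2) / τ ≤ y ∧ y < σ / τ then -1
    else 0

namespace HaarAux

noncomputable def w (r σ m : ℕ) : ℝ :=
  if m / r = 2*σ - 2 then 1 else if m / r = 2*σ - 1 then -1 else 0

lemma w_congr {r σ m₁ m₂ : ℕ} (h : m₁ / r = m₂ / r) : w r σ m₁ = w r σ m₂ := by
  unfold w; rw [h]

lemma div_eq_iff' {r j m : ℕ} (hr : 0 < r) : m / r = j ↔ j * r ≤ m ∧ m < (j+1) * r := by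
  constructor
  · rintro rfl
    refine ⟨Nat.div_mul_le_self m r, ?_⟩
    have h1 := Nat.div_add_mod m r
    have h2 := Nat.mod_lt m hr
    nlinarith [h1, h2]
  · rintro ⟨h1, h2⟩
    have h1' : j ≤ m / r := (Nat.le_div_iff_mul_le hr).mpr h1
    have h2' : m / r < j + 1 := Nat.div_lt_of_lt_mul (by linarith [h2])
    omega

/-- Basic structural facts for `2 ≤ i ≤ 2*M`, `M = 2^L`. -/
lemma facts {L M i : ℕ} (hM : M = 2^L) (h2 : 2 ≤ i) (hi : i ≤ 2*M) :
    haarScale i ∣ M ∧ 1 ≤ haarSig i ∧ haarSig i ≤ haarScale i ∧ 0 < haarScale i := by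
  set k := Nat.log 2 (i-1) with hk
  have hτ1 : 2^k ≤ i - 1 := Nat.pow_log_le_self 2 (by omega)
  have hτ2 : i - 1 < 2^(k+1) := Nat.lt_pow_succ_log_self (by norm_num) _
  have hkL : k ≤ L := by
    by_contra h
    have : 2^(L+1) ≤ 2^k := Nat.pow_le_pow_right (by norm_num) (by omega)
    have h2M : 2*M = 2^(L+1) := by rw [hM]; ring
    omega
  have hsc : haarScale i = 2^k := rfl
  have hss : haarSig i = i - 2^k := rfl
  have hpow : 2^(k+1) = 2*2^k := by ring
  refine ⟨?_, by omega, by omega, by rw [hsc]; positivity⟩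
  rw [hsc, hM]
  exact pow_dvd_pow 2 hkL

lemma half_le (a b : ℕ) : (a:ℝ) ≤ (b:ℝ) + 1/2 ↔ a ≤ b := by
  constructor
  · intro h
    have h' : (a:ℝ) < (b:ℝ) + 1 := by linarith
    have : a < b + 1 := by exact_mod_cast h'
    omega
  · intro h
    have : (a:ℝ) ≤ b := by exact_mod_cast h
    linarith

lemma half_lt (a b : ℕ) : (a:ℝ) + 1/2 < (b:ℝ) ↔ a < b := by
  constructor
  · intro h
    have h' : (a:ℝ) < b := by linarith
    exact_mod_cast h'
  · intro h
    have : (a:ℝ) + 1 ≤ b := by exact_mod_cast h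
    linarith

lemma cond_le {τ r M : ℕ} (c m : ℕ) (hτ : 0 < τ) (hM : M = r * τ) (hr : 0 < r) :
    ((c:ℝ)/(2*τ) ≤ ((m:ℝ) + 1/2)/(2*M)) ↔ c * r ≤ m := by
  have hτ' : (0:ℝ) < τ := by exact_mod_cast hτ
  have hM' : (0:ℝ) < 2*M := by
    have : 0 < M := by rw [hM]; positivity
    have : (0:ℝ) < M := by exact_mod_cast this
    linarith
  have e : (c:ℝ)/(2*τ) = ((c*r:ℕ):ℝ)/(2*M) := by
    subst hM
    push_cast
    rw [div_eq_div_iff (by positivity) (by positivity)]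
    ring
  rw [e, div_le_div_iff_of_pos_right hM']
  exact half_le _ _

lemma cond_lt {τ r M : ℕ} (c m : ℕ) (hτ : 0 < τ) (hM : M = r * τ) (hr : 0 < r) :
    (((m:ℝ) + 1/2)/(2*M) < (c:ℝ)/(2*τ)) ↔ m < c * r := by
  have hτ' : (0:ℝ) < τ := by exact_mod_cast hτ
  have hM' : (0:ℝ) < 2*M := by
    have : 0 < M := by rw [hM]; positivity
    have : (0:ℝ) < M := by exact_mod_cast this
    linarith
  have e : (c:ℝ)/(2*τ) = ((c*r:ℕ):ℝ)/(2*M) := by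
    subst hM
    push_cast
    rw [div_eq_div_iff (by positivity) (by positivity)]
    ring
  rw [e, div_lt_div_iff_of_pos_right hM']
  exact half_lt _ _

lemma haar_val {L M i : ℕ} (hM : M = 2^L) (h2 : 2 ≤ i) (hi : i ≤ 2*M) (m : ℕ) :
    haar i (((m:ℝ) + 1 - 0.5) / (2*M)) = w (M / haarScale i) (haarSig i) m := by
  obtain ⟨hdvd, hσ1, hστ, hτpos⟩ := facts hM h2 hi
  set τ := haarScale i with hτdef
  set σ := haarSig i with hσdef
  set r := M / τ with hrdef
  have hMpos : 0 < M := by rw [hM]; positivity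
  have hMr : M = r * τ := (Nat.div_mul_cancel hdvd).symm
  have hrpos : 0 < r := by
    rcases Nat.eq_zero_or_pos r with h | h
    · rw [h] at hMr; omega
    · exact h
  have hy : ((m:ℝ) + 1 - 0.5) = (m:ℝ) + 1/2 := by norm_num; ring
  rw [haar, if_neg (by omega : ¬ i = 1), hy]
  have e1 : ((σ:ℕ):ℝ) - 1 = ((2*σ - 2:ℕ):ℝ)/2 * ((2:ℝ)/2) := by
    rw [Nat.cast_sub (by omega)]; push_cast; ring
  -- rewrite the three breakpoints as c/(2τ)
  have hτ' : (0:ℝ) < (τ:ℝ) := by exact_mod_cast hτpos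
  have b1 : ((σ:ℝ) - 1)/(τ:ℝ) = ((2*σ - 2:ℕ):ℝ)/(2*τ) := by
    rw [Nat.cast_sub (by omega)]
    push_cast
    rw [div_eq_div_iff hτ'.ne' (by positivity : (2*(τ:ℝ)) ≠ 0)]
    ring
  have b2 : ((σ:ℝ) - 1/2)/(τ:ℝ) = ((2*σ - 1:ℕ):ℝ)/(2*τ) := by
    rw [Nat.cast_sub (by omega)]
    push_cast
    rw [div_eq_div_iff hτ'.ne' (by positivity : (2*(τ:ℝ)) ≠ 0)]
    ring
  have b3 : ((σ:ℝ))/(τ:ℝ) = ((2*σ:ℕ):ℝ)/(2*τ) := by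
    push_cast
    rw [div_eq_div_iff hτ'.ne' (by positivity : (2*(τ:ℝ)) ≠ 0)]
    ring
  rw [← hσdef, ← hτdef]
  simp only [b1, b2, b3, cond_le _ m hτpos hMr hrpos, cond_lt _ m hτpos hMr hrpos]
  have e2 : (2*σ - 2 + 1) = 2*σ - 1 := by omega
  have e3 : (2*σ - 1 + 1) = 2*σ := by omega
  simp only [w, div_eq_iff' hrpos, e2, e3]

lemma haar_one_val {M m : ℕ} (hM : 0 < M) (hm : m < 2*M) :
    haar 1 (((m:ℝ) + 1 - 0.5) / (2*M)) = 1 := by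
  have hy : ((m:ℝ) + 1 - 0.5) = (m:ℝ) + 1/2 := by norm_num; ring
  rw [hy, haar, if_pos rfl, if_pos]
  have hM' : (0:ℝ) < 2*M := by
    have : (0:ℝ) < M := by exact_mod_cast hM
    linarith
  constructor
  · positivity
  · rw [div_lt_one hM']
    have h1 : ((m:ℕ):ℝ) + 1 ≤ ((2*M:ℕ):ℝ) := by exact_mod_cast (by omega : m+1 ≤ 2*M)
    push_cast at h1
    linarith

lemma w_eq (r j m : ℕ) :
    w r (j+1) m = if m / r = 2*j then 1 else if m / r = 2*j+1 then -1 else 0 := by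
  have e1 : 2*(j+1) - 2 = 2*j := by omega
  have e2 : 2*(j+1) - 1 = 2*j+1 := by omega
  rw [w, e1, e2]

lemma w_zero {r j m : ℕ} (hr : 0 < r)
    (h : ¬ (2*j*r ≤ m ∧ m < 2*j*r + 2*r)) : w r (j+1) m = 0 := by
  rw [w_eq, if_neg, if_neg]
  · rw [div_eq_iff' hr]
    intro ⟨h1, h2⟩
    have e : (2*j+1+1)*r = 2*j*r + 2*r := by ring
    have e' : (2*j+1)*r = 2*j*r + r := by ring
    omega
  · rw [div_eq_iff' hr]
    intro ⟨h1, h2⟩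
    have e' : (2*j+1)*r = 2*j*r + r := by ring
    omega

lemma w_one {r j m : ℕ} (hr : 0 < r) (h1 : 2*j*r ≤ m) (h2 : m < 2*j*r + r) :
    w r (j+1) m = 1 := by
  rw [w_eq, if_pos]
  rw [div_eq_iff' hr]
  have e' : (2*j+1)*r = 2*j*r + r := by ring
  omega

lemma w_neg_one {r j m : ℕ} (hr : 0 < r) (h1 : 2*j*r + r ≤ m) (h2 : m < 2*j*r + 2*r) :
    w r (j+1) m = -1 := by
  rw [w_eq, if_neg, if_pos]
  · rw [div_eq_iff' hr]
    have e : (2*j+1+1)*r = 2*j*r + 2*r := by ring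
    have e' : (2*j+1)*r = 2*j*r + r := by ring
    omega
  · rw [div_eq_iff' hr]
    have e' : (2*j+1)*r = 2*j*r + r := by ring
    omega

lemma sum_ortho {M r' j : ℕ} (f : ℕ → ℝ) (hr' : 0 < r')
    (hub : 2*j*r' + 2*r' ≤ 2*M)
    (hconst : ∀ m₁ m₂ : ℕ, 2*j*r' ≤ m₁ → m₁ < 2*j*r' + 2*r' →
       2*j*r' ≤ m₂ → m₂ < 2*j*r' + 2*r' → f m₁ = f m₂) :
    ∑ m ∈ Finset.range (2*M), f m * w r' (j+1) m = 0 := by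
  have step1 : ∑ m ∈ Finset.range (2*M), f m * w r' (j+1) m
      = ∑ m ∈ Finset.Ico (2*j*r') (2*j*r' + 2*r'), f m * w r' (j+1) m := by
    refine (Finset.sum_subset ?_ ?_).symm
    · intro x hx
      rw [Finset.mem_Ico] at hx
      rw [Finset.mem_range]
      omega
    · intro x _ hx
      rw [Finset.mem_Ico] at hx
      rw [w_zero hr' (by omega), mul_zero]
  have step2 : ∑ m ∈ Finset.Ico (2*j*r') (2*j*r' + 2*r'), f m * w r' (j+1) m
      = ∑ m ∈ Finset.Ico (2*j*r') (2*j*r' + r'), f m * w r' (j+1) m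
        + ∑ m ∈ Finset.Ico (2*j*r' + r') (2*j*r' + 2*r'), f m * w r' (j+1) m := by
    rw [Finset.sum_Ico_consecutive _ (by omega) (by omega)]
  have hsum1 : ∑ m ∈ Finset.Ico (2*j*r') (2*j*r' + r'), f m * w r' (j+1) m
      = r' * f (2*j*r') := by
    have hc : ∀ m ∈ Finset.Ico (2*j*r') (2*j*r' + r'), f m * w r' (j+1) m = f (2*j*r') := by
      intro m hm
      have hm' := Finset.mem_Ico.mp hm
      rw [w_one hr' (by omega) (by omega), mul_one]
      exact hconst m _ (by omega) (by omega) (by omega) (by omega)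
    rw [Finset.sum_congr rfl hc, Finset.sum_const, Nat.card_Ico, nsmul_eq_mul]
    have e : 2*j*r' + r' - 2*j*r' = r' := by omega
    rw [e]
  have hsum2 : ∑ m ∈ Finset.Ico (2*j*r' + r') (2*j*r' + 2*r'), f m * w r' (j+1) m
      = -(r' * f (2*j*r')) := by
    have hc : ∀ m ∈ Finset.Ico (2*j*r' + r') (2*j*r' + 2*r'),
        f m * w r' (j+1) m = -(f (2*j*r')) := by
      intro m hm
      have hm' := Finset.mem_Ico.mp hm
      rw [w_neg_one hr' (by omega) (by omega), mul_neg_one]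
      congr 1
      exact hconst m _ (by omega) (by omega) (by omega) (by omega)
    rw [Finset.sum_congr rfl hc, Finset.sum_const, Nat.card_Ico, nsmul_eq_mul]
    have e : 2*j*r' + 2*r' - (2*j*r' + r') = r' := by omega
    rw [e]
    ring
  rw [step1, step2, hsum1, hsum2]
  ring

lemma facts2 {L M i : ℕ} (hM : M = 2^L) (h2 : 2 ≤ i) (hi : i ≤ 2*M) :
    ∃ k j, k ≤ L ∧ haarScale i = 2^k ∧ haarSig i = j+1 ∧ j+1 ≤ 2^k ∧
      M / haarScale i = 2^(L-k) ∧ i = 2^k + (j+1) := by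
  obtain ⟨hdvd, hσ1, hστ, hτpos⟩ := facts hM h2 hi
  set k := Nat.log 2 (i-1) with hk
  have hτ1 : 2^k ≤ i - 1 := Nat.pow_log_le_self 2 (by omega)
  have hsc : haarScale i = 2^k := rfl
  have hss : haarSig i = i - 2^k := rfl
  have hkL : k ≤ L := by
    by_contra h
    have h' : 2^(L+1) ≤ 2^k := Nat.pow_le_pow_right (by norm_num) (by omega)
    have h2M : 2*M = 2^(L+1) := by rw [hM]; ring
    omega
  refine ⟨k, haarSig i - 1, hkL, hsc, by omega, by omega, ?_, by omega⟩
  rw [hsc, hM, Nat.pow_div hkL (by norm_num)]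

lemma hub_aux {L M k j : ℕ} (hM : M = 2^L) (hkL : k ≤ L) (hjk : j+1 ≤ 2^k) :
    2*j*2^(L-k) + 2*2^(L-k) ≤ 2*M := by
  have e : 2*j*2^(L-k) + 2*2^(L-k) = (2*(j+1))*2^(L-k) := by ring
  rw [e]
  have h1 : 2*(j+1) ≤ 2*2^k := by omega
  calc (2*(j+1))*2^(L-k) ≤ (2*2^k)*2^(L-k) := Nat.mul_le_mul_right _ h1
    _ = 2*M := by
        rw [hM, mul_assoc, ← pow_add]
        congr 2
        omega

lemma ortho {L M : ℕ} (hM : M = 2^L) {i i' : ℕ} (h1 : 1 ≤ i) (hii : i < i') (hi' : i' ≤ 2*M) :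
    ∑ m ∈ Finset.range (2*M),
      haar i (((m:ℝ) + 1 - 0.5) / (2*M)) * haar i' (((m:ℝ) + 1 - 0.5) / (2*M)) = 0 := by
  have hMpos : 0 < M := by rw [hM]; positivity
  have h2' : 2 ≤ i' := by omega
  obtain ⟨k', j', hk'L, hsc', hsg', hjk', hr', hieq'⟩ := facts2 hM h2' hi'
  have hval' : ∀ m : ℕ, haar i' (((m:ℝ) + 1 - 0.5) / (2*M)) = w (2^(L-k')) (j'+1) m := by
    intro m
    rw [haar_val hM h2' hi' m, hsg', hr']
  have hrpos' : 0 < 2^(L-k') := by positivity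
  have hub : 2*j'*2^(L-k') + 2*2^(L-k') ≤ 2*M := hub_aux hM hk'L hjk'
  rcases eq_or_lt_of_le h1 with h1' | h1'
  · -- i = 1
    have hcongr : ∀ m ∈ Finset.range (2*M),
        haar i (((m:ℝ) + 1 - 0.5) / (2*M)) * haar i' (((m:ℝ) + 1 - 0.5) / (2*M))
          = haar 1 (((m:ℝ) + 1 - 0.5) / (2*M)) * w (2^(L-k')) (j'+1) m := by
      intro m _
      rw [hval', ← h1']
    rw [Finset.sum_congr rfl hcongr]
    refine sum_ortho _ hrpos' hub ?_
    intro m₁ m₂ a1 a2 a3 a4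
    rw [haar_one_val hMpos (by omega), haar_one_val hMpos (by omega)]
  · -- 2 ≤ i
    have h2 : 2 ≤ i := h1'
    have hi : i ≤ 2*M := by omega
    obtain ⟨k, j, hkL, hsc, hsg, hjk, hr, hieq⟩ := facts2 hM h2 hi
    have hval : ∀ m : ℕ, haar i (((m:ℝ) + 1 - 0.5) / (2*M)) = w (2^(L-k)) (j+1) m := by
      intro m
      rw [haar_val hM h2 hi m, hsg, hr]
    have hrpos : 0 < (2:ℕ)^(L-k) := by positivity
    have hkk' : k ≤ k' := by
      have hlog : Nat.log 2 (i-1) ≤ Nat.log 2 (i'-1) := Nat.log_mono_right (by omega)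
      have h2k : (2:ℕ)^(Nat.log 2 (i-1)) = 2^k := hsc
      have h2k' : (2:ℕ)^(Nat.log 2 (i'-1)) = 2^k' := hsc'
      have := Nat.pow_le_pow_right (by norm_num : 1 ≤ 2) hlog
      rw [h2k, h2k'] at this
      exact (Nat.pow_le_pow_iff_right (by norm_num)).mp this
    have hcongr : ∀ m ∈ Finset.range (2*M),
        haar i (((m:ℝ) + 1 - 0.5) / (2*M)) * haar i' (((m:ℝ) + 1 - 0.5) / (2*M))
          = w (2^(L-k)) (j+1) m * w (2^(L-k')) (j'+1) m := by
      intro m _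
      rw [hval, hval']
    rw [Finset.sum_congr rfl hcongr]
    rcases eq_or_lt_of_le hkk' with hkk | hkk
    · -- same scale: disjoint supports, pointwise zero
      subst hkk
      have hjj : j < j' := by omega
      refine Finset.sum_eq_zero ?_
      intro m _
      rw [w_eq, w_eq]
      generalize m / 2^(L-k) = d
      split_ifs <;> first | (exfalso; omega) | norm_num
    · -- k < k' : constancy argument
      refine sum_ortho _ hrpos' hub ?_
      intro m₁ m₂ a1 a2 a3 a4
      apply w_congr
      have hdvd : (2*2^(L-k')) ∣ 2^(L-k) := by
        have e : 2*2^(L-k') = 2^((L-k')+1) := by rw [pow_succ]; ring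
        rw [e]
        exact pow_dvd_pow 2 (by omega)
      obtain ⟨t, ht⟩ := hdvd
      have d1 : m₁ / (2*2^(L-k')) = j' := by
        rw [div_eq_iff' (by positivity)]
        constructor
        · calc j' * (2*2^(L-k')) = 2*j'*2^(L-k') := by ring
            _ ≤ m₁ := a1
        · calc m₁ < 2*j'*2^(L-k') + 2*2^(L-k') := a2
            _ = (j'+1) * (2*2^(L-k')) := by ring
      have d2 : m₂ / (2*2^(L-k')) = j' := by
        rw [div_eq_iff' (by positivity)]
        constructor
        · calc j' * (2*2^(L-k')) = 2*j'*2^(L-k') := by ring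
            _ ≤ m₂ := a3
        · calc m₂ < 2*j'*2^(L-k') + 2*2^(L-k') := a4
            _ = (j'+1) * (2*2^(L-k')) := by ring
      rw [ht, ← Nat.div_div_eq_div_mul m₁ (2*2^(L-k')) t, ← Nat.div_div_eq_div_mul m₂ (2*2^(L-k')) t, d1, d2]

lemma diag_pos {L M : ℕ} (hM : M = 2^L) {i : ℕ} (h1 : 1 ≤ i) (hi : i ≤ 2*M) :
    0 < ∑ m ∈ Finset.range (2*M),
      haar i (((m:ℝ) + 1 - 0.5) / (2*M)) * haar i (((m:ℝ) + 1 - 0.5) / (2*M)) := by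
  have hMpos : 0 < M := by rw [hM]; positivity
  rcases eq_or_lt_of_le h1 with h1' | h1'
  · refine Finset.sum_pos ?_ ?_
    · intro m hm
      rw [← h1', haar_one_val hMpos (Finset.mem_range.mp hm)]
      norm_num
    · exact ⟨0, Finset.mem_range.mpr (by omega)⟩
  · have h2 : 2 ≤ i := h1'
    obtain ⟨k, j, hkL, hsc, hsg, hjk, hr, hieq⟩ := facts2 hM h2 hi
    have hval : ∀ m : ℕ, haar i (((m:ℝ) + 1 - 0.5) / (2*M)) = w (2^(L-k)) (j+1) m := by
      intro m
      rw [haar_val hM h2 hi m, hsg, hr]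
    have hrpos : 0 < (2:ℕ)^(L-k) := by positivity
    have hub : 2*j*2^(L-k) + 2*2^(L-k) ≤ 2*M := hub_aux hM hkL hjk
    refine Finset.sum_pos' ?_ ⟨2*j*2^(L-k), Finset.mem_range.mpr (by omega), ?_⟩
    · intro m _
      rw [hval]
      exact mul_self_nonneg _
    · rw [hval, w_one hrpos (le_refl _) (by omega)]
      norm_num

lemma matrix_unit {L M : ℕ} (hM : M = 2^L) :
    IsUnit (Matrix.of fun (m p : Fin (2*M)) =>
      haar ((p:ℕ) + 1) ((((m:ℕ):ℝ) + 1 - 0.5) / (2*M))) := by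
  set H : Matrix (Fin (2*M)) (Fin (2*M)) ℝ := Matrix.of fun (m p : Fin (2*M)) =>
      haar ((p:ℕ) + 1) ((((m:ℕ):ℝ) + 1 - 0.5) / (2*M)) with hH
  rw [Matrix.isUnit_iff_isUnit_det, isUnit_iff_ne_zero]
  set d : Fin (2*M) → ℝ := fun p => ∑ m ∈ Finset.range (2*M),
      haar ((p:ℕ)+1) (((m:ℝ) + 1 - 0.5) / (2*M)) * haar ((p:ℕ)+1) (((m:ℝ) + 1 - 0.5) / (2*M))
    with hd
  have hD : H.transpose * H = Matrix.diagonal d := by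
    ext p q
    rw [Matrix.mul_apply]
    simp only [Matrix.transpose_apply, hH, Matrix.of_apply]
    rw [Fin.sum_univ_eq_sum_range (fun m => haar ((p:ℕ)+1) (((m:ℝ) + 1 - 0.5) / (2*M))
      * haar ((q:ℕ)+1) (((m:ℝ) + 1 - 0.5) / (2*M))) (2*M)]
    rcases eq_or_ne p q with rfl | hpq
    · rw [Matrix.diagonal_apply_eq]
    · rw [Matrix.diagonal_apply_ne _ hpq]
      have hpq' : (p:ℕ) ≠ (q:ℕ) := fun h => hpq (Fin.ext h)
      rcases lt_or_gt_of_ne hpq' with hlt | hgt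
      · exact ortho hM (by omega) (by omega) (by omega)
      · refine Eq.trans (Finset.sum_congr rfl (fun m _ => mul_comm _ _)) ?_
        exact ortho hM (by omega) (by omega) (by omega)
  have hdet : H.det * H.det = ∏ p, d p := by
    have h := congrArg Matrix.det hD
    rw [Matrix.det_mul, Matrix.det_transpose, Matrix.det_diagonal] at h
    exact h
  have hpos : 0 < ∏ p, d p := by
    refine Finset.prod_pos ?_
    intro p _
    exact diag_pos hM (by omega) (by omega)
  intro h0
  rw [h0, mul_zero] at hdet
  linarith [hdet ▸ hpos]

end HaarAux

/-- with collocation points `x_m = (m−0.5)/(2M)`, `y_n = (n−0.5)/(2N)`,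
`M = 2^{L₁}`, `N = 2^{L₂}`, the `2M·2N × 2M·2N` collocation system
`G(x_m,y_n) = Σ_{p,q} b_{p,q} h_p(x_m) h_q(y_n)` has a unique solution `(b_{p,q})`;
equivalently, the one-dimensional Haar collocation matrix `(h_p(x_m))_{m,p}` is invertible. -/
theorem haar_collocation_unique (L₁ L₂ M N : ℕ) (hM : M = 2 ^ L₁) (hN : N = 2 ^ L₂)
    (G : ℝ → ℝ → ℝ) :
    (∃! b : Fin (2 * M) → Fin (2 * N) → ℝ,
      ∀ (m : Fin (2 * M)) (n : Fin (2 * N)),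
        G ((((m : ℕ) : ℝ) + 1 - 0.5) / (2 * M)) ((((n : ℕ) : ℝ) + 1 - 0.5) / (2 * N)) =
          ∑ p : Fin (2 * M), ∑ q : Fin (2 * N),
            b p q * haar ((p : ℕ) + 1) ((((m : ℕ) : ℝ) + 1 - 0.5) / (2 * M)) *
              haar ((q : ℕ) + 1) ((((n : ℕ) : ℝ) + 1 - 0.5) / (2 * N))) ∧
    IsUnit (Matrix.of fun (m p : Fin (2 * M)) =>
      haar ((p : ℕ) + 1) ((((m : ℕ) : ℝ) + 1 - 0.5) / (2 * M))) := by
  have hA := HaarAux.matrix_unit hM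
  have hB := HaarAux.matrix_unit hN
  set A : Matrix (Fin (2*M)) (Fin (2*M)) ℝ := Matrix.of fun (m p : Fin (2*M)) =>
      haar ((p:ℕ) + 1) ((((m:ℕ):ℝ) + 1 - 0.5) / (2*M)) with hAdef
  set B : Matrix (Fin (2*N)) (Fin (2*N)) ℝ := Matrix.of fun (n q : Fin (2*N)) =>
      haar ((q:ℕ) + 1) ((((n:ℕ):ℝ) + 1 - 0.5) / (2*N)) with hBdef
  refine ⟨?_, hA⟩
  have hAd : IsUnit A.det := (Matrix.isUnit_iff_isUnit_det A).mp hA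
  have hBd : IsUnit B.det := (Matrix.isUnit_iff_isUnit_det B).mp hB
  have hBtd : IsUnit B.transpose.det := by rw [Matrix.det_transpose]; exact hBd
  set Gmat : Matrix (Fin (2*M)) (Fin (2*N)) ℝ := Matrix.of fun m n =>
      G ((((m:ℕ):ℝ) + 1 - 0.5) / (2*M)) ((((n:ℕ):ℝ) + 1 - 0.5) / (2*N)) with hGdef
  -- key reformulation
  have key : ∀ b : Fin (2*M) → Fin (2*N) → ℝ,
      (∀ (m : Fin (2*M)) (n : Fin (2*N)),
        G ((((m:ℕ):ℝ) + 1 - 0.5) / (2*M)) ((((n:ℕ):ℝ) + 1 - 0.5) / (2*N)) =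
          ∑ p : Fin (2*M), ∑ q : Fin (2*N),
            b p q * haar ((p:ℕ) + 1) ((((m:ℕ):ℝ) + 1 - 0.5) / (2*M)) *
              haar ((q:ℕ) + 1) ((((n:ℕ):ℝ) + 1 - 0.5) / (2*N)))
      ↔ A * Matrix.of b * B.transpose = Gmat := by
    intro b
    rw [← Matrix.ext_iff]
    have expand : ∀ (m : Fin (2*M)) (n : Fin (2*N)),
        (A * Matrix.of b * B.transpose) m n =
          ∑ p : Fin (2*M), ∑ q : Fin (2*N),
            b p q * haar ((p:ℕ) + 1) ((((m:ℕ):ℝ) + 1 - 0.5) / (2*M)) *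
              haar ((q:ℕ) + 1) ((((n:ℕ):ℝ) + 1 - 0.5) / (2*N)) := by
      intro m n
      simp only [Matrix.mul_apply, Matrix.transpose_apply, hAdef, hBdef, Matrix.of_apply,
        Finset.sum_mul]
      rw [Finset.sum_comm]
      exact Finset.sum_congr rfl fun p _ => Finset.sum_congr rfl fun q _ => by ring
    constructor
    · intro h m n
      rw [expand m n, ← h m n]
      rfl
    · intro h m n
      rw [← expand m n, h m n]
      rfl
  refine ⟨fun p q => (A⁻¹ * Gmat * (B.transpose)⁻¹) p q, ?_, ?_⟩
  · refine (key _).mpr ?_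
    show A * (A⁻¹ * Gmat * B.transpose⁻¹) * B.transpose = Gmat
    simp only [Matrix.mul_assoc]
    rw [Matrix.nonsing_inv_mul _ hBtd, Matrix.mul_one, ← Matrix.mul_assoc,
      Matrix.mul_nonsing_inv _ hAd, Matrix.one_mul]
  · intro b hb
    rw [key] at hb
    have step : A⁻¹ * (A * Matrix.of b * B.transpose) * B.transpose⁻¹ = Matrix.of b := by
      calc A⁻¹ * (A * Matrix.of b * B.transpose) * B.transpose⁻¹
          = (A⁻¹ * A) * (Matrix.of b * (B.transpose * B.transpose⁻¹)) := by
            simp only [Matrix.mul_assoc]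
        _ = Matrix.of b := by
            rw [Matrix.nonsing_inv_mul _ hAd, Matrix.mul_nonsing_inv _ hBtd,
              Matrix.one_mul, Matrix.mul_one]
    have : Matrix.of b = A⁻¹ * Gmat * B.transpose⁻¹ := by
      rw [← hb]
      exact step.symm
    funext p q
    exact congrFun (congrFun (congrArg (fun X => (X : Matrix _ _ ℝ)) this) p) q
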